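/- Suppose that for every coloring of the pairs of [N] with n-2 colors (taken from a linearly ordered set of n-2 colors) there is a non-increasing set of size s. Then for every red/blue coloring of the triples of [N] there is either a red clique on s vertices or a blue tight monotone path on n vertices. In other words, r_3(K_s, P_n) ≤ f(s; n-2). -/
import Mathlib

/-- A triple `u < v < w` is non-increasing with respect to `χ` (with linearly ordered
colors) if `χ(u,v) = χ(u,w) ≥ χ(v,w)` or `χ(u,v) ≥ χ(v,w) = χ(u,w)`. -/
def NonIncTriple {α : Type*} [LinearOrder α] (χ : ℕ → ℕ → α) (u v w : ℕ) : Prop :=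
  (χ u v = χ u w ∧ χ v w ≤ χ u w) ∨ (χ v w = χ u w ∧ χ v w ≤ χ u v)

/-- Length (number of vertices) of the longest blue tight monotone path ending in the
pair `(u, v)`. -/
def pathLen (φ : ℕ → ℕ → ℕ → Bool) (u v : ℕ) : ℕ :=
  max 2 (((Finset.Ico 1 u).filter (fun t => φ t u v = false)).attach.sup
    (fun t => pathLen φ t.1 u + 1))
termination_by u
decreasing_by
  have h := t.2
  simp only [Finset.mem_filter, Finset.mem_Ico] at h
  omega

lemma pathLen_ge_two (φ : ℕ → ℕ → ℕ → Bool) (u v : ℕ) : 2 ≤ pathLen φ u v := by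
  rw [pathLen]; exact le_max_left _ _

lemma pathLen_ge (φ : ℕ → ℕ → ℕ → Bool) {t u : ℕ} (v : ℕ) (ht1 : 1 ≤ t) (htu : t < u)
    (hb : φ t u v = false) : pathLen φ t u + 1 ≤ pathLen φ u v := by
  conv_rhs => rw [pathLen]
  refine le_max_of_le_right ?_
  have hm : t ∈ (Finset.Ico 1 u).filter (fun t => φ t u v = false) := by
    simp [Finset.mem_filter, Finset.mem_Ico, ht1, htu, hb]
  exact Finset.le_sup (f := fun t => pathLen φ t.1 u + 1) (Finset.mem_attach _ ⟨t, hm⟩)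

lemma pathLen_spec (φ : ℕ → ℕ → ℕ → Bool) (u v : ℕ) :
    pathLen φ u v = 2 ∨
    ∃ t, 1 ≤ t ∧ t < u ∧ φ t u v = false ∧ pathLen φ u v = pathLen φ t u + 1 := by
  rcases ((Finset.Ico 1 u).filter (fun t => φ t u v = false)).attach.eq_empty_or_nonempty
    with he | hne
  · left; rw [pathLen, he]; simp
  · obtain ⟨t, -, ht⟩ := Finset.exists_mem_eq_sup _ hne (fun t => pathLen φ t.1 u + 1)
    have hm := t.2
    simp only [Finset.mem_filter, Finset.mem_Ico] at hm
    right
    refine ⟨t.1, hm.1.1, hm.1.2, hm.2, ?_⟩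
    conv_lhs => rw [pathLen]
    rw [← ht]
    have := pathLen_ge_two φ t.1 u
    omega

lemma pathLen_path (φ : ℕ → ℕ → ℕ → Bool) (N : ℕ) :
    ∀ u v : ℕ, u ∈ Finset.Icc 1 N → v ∈ Finset.Icc 1 N → u < v →
    ∃ f : ℕ → ℕ, (∀ i < pathLen φ u v, f i ∈ Finset.Icc 1 N) ∧
      (∀ i j, i < j → j < pathLen φ u v → f i < f j) ∧
      f (pathLen φ u v - 2) = u ∧ f (pathLen φ u v - 1) = v ∧
      (∀ i, i + 2 < pathLen φ u v → φ (f i) (f (i + 1)) (f (i + 2)) = false) := by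
  intro u
  induction u using Nat.strong_induction_on with
  | _ u ih =>
    intro v hu hv huv
    rcases pathLen_spec φ u v with h2 | ⟨t, ht1, htu, hblue, heq⟩
    · refine ⟨fun i => if i = 0 then u else v, ?_, ?_, ?_, ?_, ?_⟩
      · intro i _; by_cases hi : i = 0 <;> simp [hi, hu, hv]
      · intro i j hij hj
        rw [h2] at hj
        have hi0 : i = 0 := by omega
        have hj1 : j = 1 := by omega
        simp [hi0, hj1, huv]
      · simp [h2]
      · simp [h2]
      · intro i hi; rw [h2] at hi; omega
    · have ht : t ∈ Finset.Icc 1 N := by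
        simp only [Finset.mem_Icc] at hu ⊢; omega
      obtain ⟨f, hmem, hmono, hpen, hlast, htri⟩ := ih t htu u ht hu htu
      set m := pathLen φ t u with hm
      have hm2 : 2 ≤ m := pathLen_ge_two φ t u
      have hfle : ∀ i < m, f i ≤ u := by
        intro i hi
        rcases eq_or_lt_of_le (by omega : i ≤ m - 1) with h | h
        · rw [h, hlast]
        · exact (hlast ▸ hmono i (m - 1) h (by omega)).le
      refine ⟨fun i => if i = m then v else f i, ?_, ?_, ?_, ?_, ?_⟩
      · intro i hi
        rw [heq] at hi
        by_cases him : i = m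
        · simp [him, hv]
        · simp only [if_neg him]
          exact hmem i (by omega)
      · intro i j hij hj
        rw [heq] at hj
        by_cases hjm : j = m
        · have hi : i < m := by omega
          simp only [if_neg (by omega : i ≠ m), hjm, if_pos rfl]
          exact lt_of_le_of_lt (hfle i hi) huv
        · have hj' : j < m := by omega
          simp only [if_neg (by omega : i ≠ m), if_neg hjm]
          exact hmono i j hij hj'
      · rw [heq]
        have h' : m + 1 - 2 = m - 1 := by omega
        rw [h']
        simp only [if_neg (by omega : m - 1 ≠ m)]
        exact hlast
      · rw [heq]
        simp
      · intro i hi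
        rw [heq] at hi
        by_cases h2' : i + 2 = m
        · have e0 : (if i = m then v else f i) = f i := if_neg (by omega)
          have e1 : (if i + 1 = m then v else f (i + 1)) = f (i + 1) := if_neg (by omega)
          have e2 : (if i + 2 = m then v else f (i + 2)) = v := if_pos h2'
          simp only []
          rw [e0, e1, e2]
          have e3 : f i = t := by rw [show i = m - 2 by omega]; exact hpen
          have e4 : f (i + 1) = u := by rw [show i + 1 = m - 1 by omega]; exact hlast
          rw [e3, e4]
          exact hblue
        · have : i + 2 < m := by omega
          simp only [if_neg (by omega : i ≠ m), if_neg (by omega : i + 1 ≠ m),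
            if_neg (by omega : i + 2 ≠ m)]
          exact htri i this

/-- `r_3(K_s, P_n) ≤ f(s; n-2)`: if every coloring of the pairs of `[N]` with `n - 2`
linearly ordered colors admits a non-increasing set of size `s`, then every red/blue
coloring `φ` of the triples of `[N]` (`true` = red, `false` = blue) contains a red
clique on `s` vertices or a blue tight monotone path on `n` vertices. -/
theorem ramsey_le_noninc (s n N : ℕ) (hn : 3 ≤ n)
    (hf : ∀ χ : ℕ → ℕ → Fin (n - 2),
      ∃ S : Finset ℕ, S ⊆ Finset.Icc 1 N ∧ S.card = s ∧
        ∀ u ∈ S, ∀ v ∈ S, ∀ w ∈ S, u < v → v < w → NonIncTriple χ u v w)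
    (φ : ℕ → ℕ → ℕ → Bool) :
    (∃ S : Finset ℕ, S ⊆ Finset.Icc 1 N ∧ S.card = s ∧
      ∀ u ∈ S, ∀ v ∈ S, ∀ w ∈ S, u < v → v < w → φ u v w = true) ∨
    (∃ v : ℕ → ℕ, (∀ i < n, v i ∈ Finset.Icc 1 N) ∧
      (∀ i j, i < j → j < n → v i < v j) ∧
      ∀ i, i + 2 < n → φ (v i) (v (i + 1)) (v (i + 2)) = false) := by
  by_cases hlong : ∃ u ∈ Finset.Icc 1 N, ∃ v ∈ Finset.Icc 1 N, u < v ∧ n ≤ pathLen φ u v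
  · obtain ⟨u, hu, v, hv, huv, hlen⟩ := hlong
    obtain ⟨f, hmem, hmono, -, -, htri⟩ := pathLen_path φ N u v hu hv huv
    right
    exact ⟨f, fun i hi => hmem i (by omega), fun i j hij hj => hmono i j hij (by omega),
      fun i hi => htri i (by omega)⟩
  · push_neg at hlong
    have hshort : ∀ u ∈ Finset.Icc 1 N, ∀ v ∈ Finset.Icc 1 N, u < v →
        pathLen φ u v - 2 ≤ n - 3 := by
      intro u hu v hv huv
      have := hlong u hu v hv huv
      omega
    set χ : ℕ → ℕ → Fin (n - 2) :=
      fun u v => ⟨min (pathLen φ u v - 2) (n - 3), by omega⟩ with hχ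
    obtain ⟨S, hS, hcard, hni⟩ := hf χ
    left
    refine ⟨S, hS, hcard, ?_⟩
    intro u hu v hv w hw huv hvw
    by_contra hred
    have hblue : φ u v w = false := by
      cases h : φ u v w
      · rfl
      · exact absurd h hred
    have hu' := hS hu
    have hv' := hS hv
    have hw' := hS hw
    have h1 : 1 ≤ u := (Finset.mem_Icc.mp hu').1
    have hgrow := pathLen_ge φ w h1 huv hblue
    have hle : χ v w ≤ χ u v := by
      rcases hni u hu v hv w hw huv hvw with ⟨h1', h2'⟩ | ⟨h1', h2'⟩
      · exact h1' ▸ h2'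
      · exact h2'
    rw [Fin.le_def] at hle
    simp only [hχ] at hle
    have huv2 : pathLen φ u v - 2 ≤ n - 3 := hshort u hu' v hv' huv
    have hvw2 : pathLen φ v w - 2 ≤ n - 3 := hshort v hv' w hw' hvw
    have h2uv := pathLen_ge_two φ u v
    rw [min_eq_left hvw2, min_eq_left huv2] at hle
    omega
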